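/- Let N be a finite nonempty player set, for each nonempty S ⊆ N let a_S < b_S be reals with μ_S = (a_S + b_S)/2, and let r : N → ℝ with r_i ≥ 0 for all i and r(N) = 1. Then for every nonempty S ⊆ N, the pushforward of Unif[a_N, b_N] under the map z ↦ r(S)·z second-order stochastically dominates Unif[a_S, b_S] if and only if r(S)·a_N ≥ a_S and r(S)·μ_N ≥ μ_S (equivalently r(S) ≥ max{μ_S/μ_N, a_S/a_N} when a_N, μ_N > 0). -/

import Mathlib

open MeasureTheory ProbabilityTheory
open scoped NNReal ENNReal

/-- `P` second-order stochastically dominates `Q`. -/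
def SSD (P Q : Measure ℝ) : Prop :=
  ∀ u : ℝ, (∫ z in Set.Iic u, (cdf P z - cdf Q z)) ≤ 0

/-- The uniform probability measure on the interval `[a, b]`. -/
noncomputable def unif (a b : ℝ) : Measure ℝ :=
  (ENNReal.ofReal (b - a))⁻¹ • (volume.restrict (Set.Icc a b))

section Aux
open Set

lemma unif_isProb {a b : ℝ} (hab : a < b) : IsProbabilityMeasure (unif a b) := by
  constructor
  rw [unif, Measure.smul_apply, Measure.restrict_apply MeasurableSet.univ, Set.univ_inter,
    Real.volume_Icc, smul_eq_mul, ENNReal.inv_mul_cancel]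
  · simp [sub_pos.2 hab, ne_of_gt]
  · exact ENNReal.ofReal_ne_top

lemma unif_Iic {a b : ℝ} (hab : a < b) (z : ℝ) :
    unif a b (Iic z) = ENNReal.ofReal ((min z b - a) / (b - a)) := by
  rw [unif, Measure.smul_apply, Measure.restrict_apply measurableSet_Iic]
  have h1 : Iic z ∩ Icc a b = Icc a (min z b) := by
    ext x; simp only [Set.mem_inter_iff, Set.mem_Icc, Set.mem_Iic, le_min_iff]; tauto
  rw [h1, Real.volume_Icc, smul_eq_mul, ENNReal.ofReal_div_of_pos (sub_pos.2 hab),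
    ENNReal.div_eq_inv_mul]

/-- clamped cdf of the uniform distribution -/
noncomputable def Fc (a b : ℝ) (z : ℝ) : ℝ := max 0 (min 1 ((z - a)/(b - a)))

/-- cdf of the Dirac measure at 0 -/
noncomputable def Fd (z : ℝ) : ℝ := Set.indicator (Ici (0:ℝ)) 1 z

lemma cdf_unif {a b : ℝ} (hab : a < b) (z : ℝ) : cdf (unif a b) z = Fc a b z := by
  have := unif_isProb hab
  have hL : (0:ℝ) < b - a := sub_pos.2 hab
  rw [cdf_eq_real, measureReal_def, unif_Iic hab, ENNReal.toReal_ofReal', Fc, max_comm]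
  congr 1
  rw [min_comm 1, eq_comm, ← min_sub_sub_right, ← min_div_div_right hL.le, div_self hL.ne',
    min_comm]

lemma cdf_map_pos {A B : ℝ} (hab : A < B) {c : ℝ} (hc : 0 < c) (z : ℝ) :
    cdf ((unif A B).map (fun x => c * x)) z = Fc (c*A) (c*B) z := by
  have := unif_isProb hab
  have : IsProbabilityMeasure ((unif A B).map (fun x => c * x)) :=
    Measure.isProbabilityMeasure_map (measurable_const_mul c).aemeasurable
  have hpre : (fun x => c * x) ⁻¹' Iic z = Iic (z/c) := by
    ext x
    simp only [Set.mem_preimage, Set.mem_Iic, le_div_iff₀ hc, mul_comm]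
  rw [cdf_eq_real, measureReal_def, Measure.map_apply (measurable_const_mul c) measurableSet_Iic, hpre,
    ← measureReal_def, ← cdf_eq_real, cdf_unif hab]
  unfold Fc
  congr 2
  rw [div_eq_div_iff (sub_pos.2 hab).ne' (by nlinarith : c*B - c*A ≠ 0)]
  field_simp

lemma cdf_map_zero {A B : ℝ} (hab : A < B) (z : ℝ) :
    cdf ((unif A B).map (fun x => (0:ℝ) * x)) z = Fd z := by
  have := unif_isProb hab
  have : IsProbabilityMeasure ((unif A B).map (fun x => (0:ℝ) * x)) :=
    Measure.isProbabilityMeasure_map (measurable_const_mul 0).aemeasurable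
  rw [cdf_eq_real, measureReal_def, Measure.map_apply (measurable_const_mul 0) measurableSet_Iic]
  by_cases h0 : (0:ℝ) ≤ z
  · have : (fun x => (0:ℝ) * x) ⁻¹' Iic z = Set.univ := by
      ext x; simp [Set.mem_Iic, h0]
    rw [this, measure_univ]
    simp [Fd, Set.indicator_of_mem, h0, Set.mem_Ici]
  · have : (fun x => (0:ℝ) * x) ⁻¹' Iic z = (∅ : Set ℝ) := by
      ext x; simp [Set.mem_Iic, h0]
    rw [this]
    simp [Fd, Set.indicator_of_notMem, h0, Set.mem_Ici]

/-- integral of the cdf over `Iic u` -/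
noncomputable def G (a b u : ℝ) : ℝ :=
  if u ≤ a then 0 else if u ≤ b then (u-a)^2/(2*(b-a)) else u - (a+b)/2

lemma G_left {a b u : ℝ} (h : u ≤ a) : G a b u = 0 := if_pos h

lemma G_mid {a b u : ℝ} (h1 : ¬ u ≤ a) (h2 : u ≤ b) : G a b u = (u-a)^2/(2*(b-a)) := by
  rw [G, if_neg h1, if_pos h2]

lemma G_right {a b u : ℝ} (hab : a ≤ b) (h : b ≤ u) : G a b u = u - (a+b)/2 := by
  rcases le_or_gt u a with h1 | h1
  · have h2 : u = a := le_antisymm h1 (hab.trans h)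
    have h3 : a = b := le_antisymm hab (h.trans h1)
    rw [G_left h1, h2, ← h3]; ring
  · rcases le_or_gt u b with h2 | h2
    · have hub : u = b := le_antisymm h2 h
      have hL : a < b := hub ▸ h1
      rw [G_mid (not_le.2 h1) h2, hub, div_eq_iff (by nlinarith : 2*(b-a) ≠ 0)]
      ring
    · rw [G, if_neg (not_le.2 h1), if_neg (not_le.2 h2)]

lemma G_nonneg {a b u : ℝ} (hab : a ≤ b) : 0 ≤ G a b u := by
  rcases le_or_gt u a with h1 | h1
  · rw [G_left h1]
  · rcases le_or_gt u b with h2 | h2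
    · rw [G_mid (not_le.2 h1) h2]
      have : (0:ℝ) < b - a := by linarith
      positivity
    · rw [G_right hab h2.le]; linarith

lemma G_ge_linear {a b u : ℝ} (hab : a ≤ b) : u - (a+b)/2 ≤ G a b u := by
  rcases le_or_gt u a with h1 | h1
  · rw [G_left h1]; linarith
  · rcases le_or_gt u b with h2 | h2
    · have hL : a < b := lt_of_lt_of_le h1 h2
      rw [G_mid (not_le.2 h1) h2, le_div_iff₀ (by linarith : (0:ℝ) < 2*(b-a))]
      nlinarith [sq_nonneg (b - u)]
    · rw [G_right hab h2.le]

/-- main real-analysis lemma -/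
lemma G_le_iff {a b α β : ℝ} (hab : a < b) (hαβ : α ≤ β) :
    (∀ u, G α β u ≤ G a b u) ↔ (a ≤ α ∧ (a+b)/2 ≤ (α+β)/2) := by
  constructor
  · intro H
    constructor
    · by_contra hcon
      push_neg at hcon
      rcases eq_or_lt_of_le hαβ with heq | hlt
      · have hu := H ((α+a)/2)
        rw [G_left (by linarith : (α+a)/2 ≤ a), ← heq,
          G_right le_rfl (by linarith : α ≤ (α+a)/2)] at hu
        linarith
      · set u := min ((α+a)/2) β with hu_def
        have hαu : α < u := lt_min (by linarith) hlt
        have huβ : u ≤ β := min_le_right _ _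
        have hua : u ≤ a := (min_le_left _ _).trans (by linarith)
        have hu := H u
        rw [G_left hua, G_mid (not_le.2 hαu) huβ] at hu
        have hβα : (0:ℝ) < β - α := by linarith
        have : (0:ℝ) < (u-α)^2/(2*(β-α)) := div_pos (by nlinarith) (by linarith)
        linarith
    · have hu := H (max b β)
      rw [G_right hαβ (le_max_right _ _), G_right hab.le (le_max_left _ _)] at hu
      linarith
  · rintro ⟨h1, h2⟩ u
    have h2' : a + b ≤ α + β := by linarith
    rcases le_or_gt u α with hu1 | hu1
    · rw [G_left hu1]; exact G_nonneg hab.le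
    · rcases le_or_gt β u with hu2 | hu2
      · rw [G_right hαβ hu2]
        calc u - (α+β)/2 ≤ u - (a+b)/2 := by linarith
          _ ≤ G a b u := G_ge_linear hab.le
      · have hm : (0:ℝ) < β - α := by linarith
        rw [G_mid (not_le.2 hu1) hu2.le]
        rcases le_or_gt u b with hub | hub
        · rw [G_mid (not_le.2 (lt_of_le_of_lt h1 hu1)) hub,
            div_le_div_iff₀ (by linarith : (0:ℝ) < 2*(β-α)) (by linarith : (0:ℝ) < 2*(b-a))]
          nlinarith [mul_nonneg (mul_nonneg (by linarith : (0:ℝ) ≤ α - a)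
              (by linarith : (0:ℝ) ≤ u - α)) (by linarith : (0:ℝ) ≤ β - u),
            mul_nonneg (sq_nonneg (u - α)) (by linarith : (0:ℝ) ≤ β - α + 2*(α - a) - (b - a)),
            mul_nonneg (mul_nonneg (by linarith : (0:ℝ) ≤ α - a) (by linarith : (0:ℝ) ≤ α - a))
              (by linarith : (0:ℝ) ≤ β - α)]
        · rw [G_right hab.le hub.le, div_le_iff₀ (by linarith : (0:ℝ) < 2*(β-α))]
          nlinarith [mul_nonneg (by linarith : (0:ℝ) ≤ u - α) (by linarith : (0:ℝ) ≤ β - u)]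

lemma Fc_zero {a b z : ℝ} (hab : a < b) (hz : z ≤ a) : Fc a b z = 0 :=
  max_eq_left ((min_le_right _ _).trans (div_nonpos_iff.2 (Or.inr ⟨by linarith, by linarith⟩)))

lemma Fc_mid {a b z : ℝ} (hab : a < b) (ha : a ≤ z) (hz : z ≤ b) :
    Fc a b z = (z - a)/(b - a) := by
  rw [Fc, min_eq_right ((div_le_one (by linarith)).2 (by linarith)),
    max_eq_right (div_nonneg (by linarith) (by linarith))]

lemma Fc_one {a b z : ℝ} (hab : a < b) (hz : b ≤ z) : Fc a b z = 1 := by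
  rw [Fc, min_eq_left ((le_div_iff₀ (by linarith : (0:ℝ) < b - a)).2 (by linarith)),
    max_eq_right zero_le_one]

lemma Fc_cont (a b : ℝ) : Continuous (Fc a b) := by
  unfold Fc; fun_prop

lemma intgFc {a b : ℝ} (hab : a < b) (u : ℝ) : IntegrableOn (Fc a b) (Iic u) := by
  have h1 : IntegrableOn (Fc a b) (Iic (min a u)) := by
    apply (integrableOn_congr_fun (fun z hz => (Fc_zero hab ((le_min_iff.1 hz).1)).symm)
      measurableSet_Iic).1
    exact integrableOn_zero
  have h2 : IntegrableOn (Fc a b) (Ioc (min a u) u) := (Fc_cont a b).integrableOn_Ioc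
  have := h1.union h2
  rwa [Iic_union_Ioc_eq_Iic (min_le_right a u)] at this

lemma intgFd (u : ℝ) : IntegrableOn Fd (Iic u) := by
  unfold Fd
  rw [IntegrableOn, integrable_indicator_iff measurableSet_Ici]
  apply (integrableOn_const_iff (C := (1:ℝ)) (by simp)).2
  right
  rw [Measure.restrict_apply measurableSet_Ici]
  have : Ici (0:ℝ) ∩ Iic u = Icc 0 u := by ext x; simp [mem_Icc, and_comm]
  rw [this, Real.volume_Icc]
  exact ENNReal.ofReal_lt_top

lemma intJ {a b x y : ℝ} (hab : a < b) (hxy : x ≤ y) :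
    ∫ z in Ioc x y, (z - a)/(b - a) = ((y-a)^2 - (x-a)^2)/(2*(b-a)) := by
  rw [← intervalIntegral.integral_of_le hxy]
  have : ∀ z : ℝ, (z - a)/(b-a) = (z - a) * (b-a)⁻¹ := fun z => div_eq_mul_inv _ _
  simp_rw [this]
  rw [intervalIntegral.integral_mul_const, intervalIntegral.integral_sub
    intervalIntegral.intervalIntegrable_id (intervalIntegrable_const),
    integral_id, intervalIntegral.integral_const]
  have hba : b - a ≠ 0 := by linarith
  field_simp
  ring

lemma intFc {a b : ℝ} (hab : a < b) (u : ℝ) : ∫ z in Iic u, Fc a b z = G a b u := by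
  rcases le_or_gt u a with h1 | h1
  · rw [G, if_pos h1, setIntegral_congr_fun measurableSet_Iic
      (fun z hz => Fc_zero hab (le_trans hz h1))]
    simp
  · have hsplit : Iic a ∪ Ioc a u = Iic u := Iic_union_Ioc_eq_Iic h1.le
    have hIa : ∫ z in Iic a, Fc a b z = 0 := by
      rw [setIntegral_congr_fun measurableSet_Iic (fun z hz => Fc_zero hab hz)]; simp
    rw [← hsplit, setIntegral_union (Iic_disjoint_Ioc le_rfl) measurableSet_Ioc
      (intgFc hab a) ((Fc_cont a b).integrableOn_Ioc), hIa, zero_add]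
    rcases le_or_gt u b with h2 | h2
    · rw [setIntegral_congr_fun measurableSet_Ioc
        (fun z hz => Fc_mid hab hz.1.le (hz.2.trans h2)), intJ hab h1.le,
        G, if_neg (not_le.2 h1), if_pos h2]
      ring_nf
    · have : Ioc a b ∪ Ioc b u = Ioc a u := Ioc_union_Ioc_eq_Ioc hab.le h2.le
      rw [← this, setIntegral_union (Ioc_disjoint_Ioc_of_le le_rfl) measurableSet_Ioc
        ((Fc_cont a b).integrableOn_Ioc) ((Fc_cont a b).integrableOn_Ioc),
        setIntegral_congr_fun measurableSet_Ioc
          (fun z hz => Fc_mid hab hz.1.le hz.2), intJ hab hab.le,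
        setIntegral_congr_fun measurableSet_Ioc (fun z hz => Fc_one hab hz.1.le)]
      rw [setIntegral_const, Real.volume_real_Ioc_of_le h2.le, smul_eq_mul, mul_one,
        G, if_neg (not_le.2 h1), if_neg (not_le.2 h2)]
      have hba : b - a ≠ 0 := by linarith
      field_simp
      ring

lemma intFd (u : ℝ) : ∫ z in Iic u, Fd z = G 0 0 u := by
  unfold Fd
  rw [integral_indicator measurableSet_Ici]
  have : Ici (0:ℝ) ∩ Iic u = Icc 0 u := by ext x; simp [mem_Icc, and_comm]
  simp only [Pi.one_apply]
  rw [Measure.restrict_restrict measurableSet_Ici, this, setIntegral_const, Real.volume_real_Icc,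
    smul_eq_mul, mul_one]
  rcases le_or_gt u 0 with h | h
  · rw [G, if_pos h, max_eq_right (by linarith)]
  · rw [G, if_neg (not_le.2 h), if_neg (not_le.2 h), max_eq_left (by linarith)]
    ring

lemma ssd_iff {P Q : Measure ℝ} {F₁ F₂ G₁ G₂ : ℝ → ℝ}
    (h1 : ∀ z, cdf P z = F₁ z) (h2 : ∀ z, cdf Q z = F₂ z)
    (i1 : ∀ u, IntegrableOn F₁ (Iic u)) (i2 : ∀ u, IntegrableOn F₂ (Iic u))
    (g1 : ∀ u, ∫ z in Iic u, F₁ z = G₁ u) (g2 : ∀ u, ∫ z in Iic u, F₂ z = G₂ u) :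
    SSD P Q ↔ ∀ u, G₁ u ≤ G₂ u := by
  have key : ∀ u : ℝ, (∫ z in Set.Iic u, (cdf P z - cdf Q z)) = G₁ u - G₂ u := by
    intro u
    have : ∀ z : ℝ, cdf P z - cdf Q z = F₁ z - F₂ z := fun z => by rw [h1, h2]
    simp_rw [this]
    rw [integral_sub (i1 u) (i2 u), g1, g2]
  constructor
  · intro h u
    have := h u
    rw [key u] at this
    linarith
  · intro h u
    rw [key u]
    have := h u
    linarith

end Aux

/-- For uniformly distributed coalitional values, a stochastic payoff without transfer
payments SSD-dominates the value of `S` iff `r(S)·a_N ≥ a_S` and `r(S)·μ_N ≥ μ_S`. -/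
theorem ssd_core_r_uniform_iff {N : Type*} [Fintype N] [DecidableEq N] [Nonempty N]
    (a b : Finset N → ℝ)
    (hab : ∀ S : Finset N, S.Nonempty → a S < b S)
    (r : N → ℝ) (hr : ∀ i, 0 ≤ r i) (hrN : ∑ i : N, r i = 1) :
    ∀ S : Finset N, S.Nonempty →
      (SSD ((unif (a Finset.univ) (b Finset.univ)).map
            (fun z => (∑ i ∈ S, r i) * z))
          (unif (a S) (b S)) ↔
        a S ≤ (∑ i ∈ S, r i) * a Finset.univ ∧
          (a S + b S) / 2 ≤ (∑ i ∈ S, r i) * ((a Finset.univ + b Finset.univ) / 2)) := by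
  intro S hS
  have hN : a Finset.univ < b Finset.univ := hab _ Finset.univ_nonempty
  have hS' : a S < b S := hab S hS
  set c := ∑ i ∈ S, r i with hc
  have hc0 : 0 ≤ c := Finset.sum_nonneg fun i _ => hr i
  rcases hc0.eq_or_lt with h0 | h0
  · rw [← h0]
    rw [ssd_iff (cdf_map_zero hN) (cdf_unif hS') intgFd (intgFc hS') intFd (intFc hS'),
      G_le_iff hS' le_rfl]
    constructor <;> rintro ⟨hx, hy⟩ <;> exact ⟨by linarith, by linarith⟩
  · have hAB : c * a Finset.univ < c * b Finset.univ := by nlinarith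
    rw [ssd_iff (cdf_map_pos hN h0) (cdf_unif hS') (intgFc hAB) (intgFc hS')
      (intFc hAB) (intFc hS'), G_le_iff hS' hAB.le]
    constructor <;> rintro ⟨hx, hy⟩ <;> exact ⟨hx, by linarith⟩
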